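/- (Marginal on midpoints.) Let a,b,c > 0, set A = (a−b−c)/(a+b+c), B = (b−a−c)/(a+b+c), C = (c−a−b)/(a+b+c), and let ε_a, ε_b, ε_c ∈ ℂ satisfy ε_b ε_c = A, ε_a ε_c = B, ε_a ε_b = C. Then for every σ^e ∈ {−1,+1}^{E_n}, Σ_{σ^v ∈ {−1,+1}^{V_n}} w(σ^v, σ^e) = 2^{2n²} ∏_{v ∈ V_n} (1 + A σ^e_{v,b} σ^e_{v,c} + B σ^e_{v,a} σ^e_{v,c} + C σ^e_{v,a} σ^e_{v,b}) = (8/(a+b+c))^{2n²} · w(σ^e), where w(σ^e) is the 1-2 model weight of σ^e. -/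

import Mathlib

open MeasureTheory Filter Topology

/-- The three edge types of the hexagonal lattice: `a` (horizontal),
`b` (NW/SE), `c` (NE/SW). -/
inductive EType : Type
  | a : EType
  | b : EType
  | c : EType
deriving DecidableEq

instance : Fintype EType :=
  ⟨{.a, .b, .c}, fun x => by cases x <;> simp⟩

/-- A vertex of the (toroidal or infinite) hexagonal lattice with coordinates in `α`. -/
abbrev HexVtx (α : Type) : Type := (α × α) × Bool

/-- An edge of the hexagonal lattice: its type together with coordinates in `α`. -/
abbrev HexEdge (α : Type) : Type := EType × α × α

/-- The `s`-type edge incident to the vertex `v`. -/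
def edgeAt {α : Type} [Sub α] [One α] (v : HexVtx α) : EType → HexEdge α
  | .a => (.a, v.1)
  | .b => if v.2 then (.b, v.1) else (.b, (v.1.1, v.1.2 - 1))
  | .c => if v.2 then (.c, v.1) else (.c, (v.1.1 - 1, v.1.2))

/-- The two endpoints of an edge. -/
def ends {α : Type} [Add α] [One α] : HexEdge α → HexVtx α × HexVtx α
  | (.a, x, y) => (((x, y), false), ((x, y), true))
  | (.b, x, y) => (((x, y), true), ((x, y + 1), false))
  | (.c, x, y) => (((x, y), true), ((x + 1, y), false))

/-- The 1-2 model vertex weight of a triple of incident edge spins. -/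
def vWt (a b c : ℝ) (sa sb sc : Bool) : ℝ :=
  if sb = sc ∧ sa ≠ sb then a
  else if sa = sc ∧ sb ≠ sa then b
  else if sa = sb ∧ sc ≠ sa then c
  else 0

/-- Vertices of the toroidal lattice `H_n`. -/
abbrev VF (n : ℕ) : Type := HexVtx (ZMod n)

/-- Edges of the toroidal lattice `H_n`. -/
abbrev EF (n : ℕ) : Type := HexEdge (ZMod n)

/-- Spin configurations on the edges of `H_n`; `true` means spin `+1`. -/
abbrev ConfF (n : ℕ) : Type := EF n → Bool

/-- The 1-2 model weight of a configuration on `H_n`. -/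
def confWt (n : ℕ) [NeZero n] (a b c : ℝ) (σ : ConfF n) : ℝ :=
  ∏ v : VF n, vWt a b c (σ (edgeAt v .a)) (σ (edgeAt v .b)) (σ (edgeAt v .c))

/-- The 1-2 model partition function on `H_n`. -/
noncomputable def Zn (n : ℕ) [NeZero n] (a b c : ℝ) : ℝ :=
  ∑ σ : ConfF n, confWt n a b c σ

/-- Vertices of the infinite hexagonal lattice `H`. -/
abbrev VI : Type := HexVtx ℤ

/-- Edges of the infinite hexagonal lattice `H`. -/
abbrev EI : Type := HexEdge ℤ

/-- Configurations on the infinite lattice: the space `Ω = {−1,+1}^𝔼`. -/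
abbrev Config : Type := EI → Bool

/-- Periodic lift of a configuration on `H_n` to the infinite lattice. -/
def liftConf (n : ℕ) (σ : ConfF n) : Config :=
  fun e => σ (e.1, ((e.2.1 : ZMod n), (e.2.2 : ZMod n)))

/-- The pushforward `μ̂_n` on `Ω` of the 1-2 model measure `μ_n` on `H_n`. -/
noncomputable def muHat (n : ℕ) [NeZero n] (a b c : ℝ) : Measure Config :=
  ∑ σ : ConfF n, ENNReal.ofReal (confWt n a b c σ / Zn n a b c) •
    Measure.dirac (liftConf n σ)

/-- `μ` is the weak limit of the sequence `μ̂_n` (tested against all bounded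
continuous functions). -/
def IsWeakLimit (a b c : ℝ) (μ : Measure Config) : Prop :=
  IsProbabilityMeasure μ ∧
    ∀ f : BoundedContinuousFunction Config ℝ,
      Tendsto (fun n : ℕ => ∫ ω, f ω ∂ muHat (n + 1) a b c) atTop (𝓝 (∫ ω, f ω ∂ μ))

/-- The spin value (`±1`) of a Boolean state, as a complex number. -/
def cspin (s : Bool) : ℂ := if s then 1 else -1

/-- The spin-vector weight `w(σ^v, σ^e)` of a pair of vertex and midpoint spin
configurations on `H_n`, with half-edge constants `ε_a, ε_b, ε_c ∈ ℂ`. -/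
noncomputable def spinWt (n : ℕ) [NeZero n] (ε : EType → ℂ)
    (σv : VF n → Bool) (σe : ConfF n) : ℂ :=
  ∏ v : VF n, ∏ s : EType, (1 + ε s * cspin (σv v) * cspin (σe (edgeAt v s)))

lemma etype_prod (h : EType → ℂ) : ∏ s : EType, h s = h .a * h .b * h .c := by
  have : (Finset.univ : Finset EType) = {.a, .b, .c} := by decide
  rw [this]; simp [Finset.prod_insert, mul_assoc]

lemma vtx_sum (ε : EType → ℂ) (A B C : ℂ)
    (hbc : ε .b * ε .c = A) (hac : ε .a * ε .c = B) (hab : ε .a * ε .b = C)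
    (u : EType → ℂ) :
    ∑ x : Bool, ∏ s : EType, (1 + ε s * cspin x * u s) =
      2 * (1 + A * u .b * u .c + B * u .a * u .c + C * u .a * u .b) := by
  rw [Fintype.sum_bool, etype_prod, etype_prod]
  simp only [cspin, if_true, if_false, Bool.false_eq_true]
  linear_combination (2 * u .b * u .c) * hbc
    + (2 * u .a * u .c) * hac + (2 * u .a * u .b) * hab

/-- marginal on midpoints. Summing the spin-vector weight over
all vertex configurations yields a weight proportional to the 1-2 model weight. -/
theorem marginal_on_midpoints
    (n : ℕ) [NeZero n] (a b c : ℝ) (ha : 0 < a) (hb : 0 < b) (hc : 0 < c)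
    (A B C : ℝ)
    (hA : A = (a - b - c) / (a + b + c))
    (hB : B = (b - a - c) / (a + b + c))
    (hC : C = (c - a - b) / (a + b + c))
    (ε : EType → ℂ)
    (hbc : ε .b * ε .c = (A : ℂ))
    (hac : ε .a * ε .c = (B : ℂ))
    (hab : ε .a * ε .b = (C : ℂ))
    (σe : ConfF n) :
    (∑ σv : VF n → Bool, spinWt n ε σv σe =
        2 ^ (2 * n ^ 2) *
          ∏ v : VF n,
            (1 + (A : ℂ) * cspin (σe (edgeAt v .b)) * cspin (σe (edgeAt v .c))
               + (B : ℂ) * cspin (σe (edgeAt v .a)) * cspin (σe (edgeAt v .c))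
               + (C : ℂ) * cspin (σe (edgeAt v .a)) * cspin (σe (edgeAt v .b)))) ∧
      ∑ σv : VF n → Bool, spinWt n ε σv σe =
        ((8 / (a + b + c) : ℝ) : ℂ) ^ (2 * n ^ 2) * ((confWt n a b c σe : ℝ) : ℂ) := by
  have hs : a + b + c ≠ 0 := by positivity
  have hsC : ((a + b + c : ℝ) : ℂ) ≠ 0 := by exact_mod_cast hs
  have hcard : Fintype.card (VF n) = 2 * n ^ 2 := by
    simp [ZMod.card]; ring
  have h1 : ∑ σv : VF n → Bool, spinWt n ε σv σe =
      2 ^ (2 * n ^ 2) *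
        ∏ v : VF n,
          (1 + (A : ℂ) * cspin (σe (edgeAt v .b)) * cspin (σe (edgeAt v .c))
             + (B : ℂ) * cspin (σe (edgeAt v .a)) * cspin (σe (edgeAt v .c))
             + (C : ℂ) * cspin (σe (edgeAt v .a)) * cspin (σe (edgeAt v .b))) := by
    unfold spinWt
    rw [← Fintype.prod_sum fun v (x : Bool) =>
      ∏ s : EType, (1 + ε s * cspin x * cspin (σe (edgeAt v s)))]
    have key : ∀ v : VF n, (∑ x : Bool,
        ∏ s : EType, (1 + ε s * cspin x * cspin (σe (edgeAt v s)))) =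
        2 * (1 + (A : ℂ) * cspin (σe (edgeAt v .b)) * cspin (σe (edgeAt v .c))
           + (B : ℂ) * cspin (σe (edgeAt v .a)) * cspin (σe (edgeAt v .c))
           + (C : ℂ) * cspin (σe (edgeAt v .a)) * cspin (σe (edgeAt v .b))) :=
      fun v => vtx_sum ε A B C hbc hac hab fun s => cspin (σe (edgeAt v s))
    simp only [key]
    rw [Finset.prod_mul_distrib, Finset.prod_const, Finset.card_univ, hcard]
  refine ⟨h1, ?_⟩
  rw [h1]
  have hvtx : ∀ v : VF n,
      (1 + (A : ℂ) * cspin (σe (edgeAt v .b)) * cspin (σe (edgeAt v .c))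
         + (B : ℂ) * cspin (σe (edgeAt v .a)) * cspin (σe (edgeAt v .c))
         + (C : ℂ) * cspin (σe (edgeAt v .a)) * cspin (σe (edgeAt v .b))) =
      ((4 / (a + b + c) : ℝ) : ℂ) *
        ((vWt a b c (σe (edgeAt v .a)) (σe (edgeAt v .b)) (σe (edgeAt v .c)) : ℝ) : ℂ) := by
    intro v
    have hsC' : (a : ℂ) + b + c ≠ 0 := by exact_mod_cast hs
    subst hA hB hC
    rcases Bool.eq_false_or_eq_true (σe (edgeAt v .a)) with h1 | h1 <;>
    rcases Bool.eq_false_or_eq_true (σe (edgeAt v .b)) with h2 | h2 <;>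
    rcases Bool.eq_false_or_eq_true (σe (edgeAt v .c)) with h3 | h3 <;>
      simp only [h1, h2, h3, cspin, vWt] <;> norm_num <;>
      field_simp <;> ring
  rw [Finset.prod_congr rfl fun v _ => hvtx v, Finset.prod_mul_distrib,
    Finset.prod_const, Finset.card_univ, hcard]
  have h8 : ((8 / (a + b + c) : ℝ) : ℂ) = 2 * ((4 / (a + b + c) : ℝ) : ℂ) := by
    push_cast; ring
  rw [h8, mul_pow]
  unfold confWt
  push_cast
  ring
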